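/- Let 𝒢 ⊆ 𝒫(Θ) and suppose: D(Q,Π) ≤ M for all Q ∈ 𝒬 and all Π ∈ 𝒢; some Q ∈ 𝒬 has T_n(Q) < ∞; and there exists P_n^⋆ ∈ 𝒬 with J_{L_n}(P_n^⋆) ≤ J_{L_n}(Q) for all Q ∈ 𝒬. Then for every prior Π ∈ 𝒢, every minimiser Q_n of T_n over 𝒬 lies in the set ℛ_n^⋆ := {Q ∈ 𝒬 : J_{L_n}(Q) − J_{L_n}(P_n^⋆) ≤ M/(nβ)}. -/

import Mathlib

open MeasureTheory Filter Topology
open scoped ENNReal NNReal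

/-- The loss functional `J_f(ν) := ∫ f dν`, valued in the extended reals; for `f`
bounded below it takes values in `(-∞, ∞]`. -/
noncomputable def J {Θ : Type*} [MeasurableSpace Θ] (f : Θ → ℝ) (ν : Measure Θ) : EReal :=
  ((∫⁻ θ, ENNReal.ofReal (f θ) ∂ν : ℝ≥0∞) : EReal) -
    ((∫⁻ θ, ENNReal.ofReal (-f θ) ∂ν : ℝ≥0∞) : EReal)

/-- The GVI objective `T n β L D Π Q := n · J_L(Q) + (1/β) · D(Q, Π)`. -/
noncomputable def T {Θ : Type*} [MeasurableSpace Θ] (n : ℕ) (β : ℝ) (L : Θ → ℝ)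
    (D : ProbabilityMeasure Θ → ProbabilityMeasure Θ → ℝ)
    (prior Q : ProbabilityMeasure Θ) : EReal :=
  ((n : ℝ) : EReal) * J L (Q : Measure Θ) + ((1 / β * D Q prior : ℝ) : EReal)

/-- `f : Θ → ℝ` is coercive if for every `c` there is a compact set outside of which `f > c`. -/
def Coercive {Θ : Type*} [TopologicalSpace Θ] (f : Θ → ℝ) : Prop :=
  ∀ c : ℝ, ∃ K : Set Θ, IsCompact K ∧ ∀ θ ∉ K, c < f θ

/-- The mixture `a·μ + (1−a)·ν` of two probability measures. -/
noncomputable def mix {Θ : Type*} [MeasurableSpace Θ] (μ ν : ProbabilityMeasure Θ) (a : ℝ)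
    (ha0 : 0 ≤ a) (ha1 : a ≤ 1) : ProbabilityMeasure Θ :=
  ⟨ENNReal.ofReal a • (μ : Measure Θ) + ENNReal.ofReal (1 - a) • (ν : Measure Θ), by
    constructor
    simp only [Measure.coe_add, Pi.add_apply, Measure.smul_apply, smul_eq_mul, measure_univ,
      mul_one]
    rw [← ENNReal.ofReal_add ha0 (by linarith)]
    norm_num⟩

/-- The Dirac probability measure at `θ`. -/
noncomputable def diracProb {Θ : Type*} [MeasurableSpace Θ] (θ : Θ) : ProbabilityMeasure Θ :=
  ⟨Measure.dirac θ, inferInstance⟩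

/-- `𝒬` allows for Dirac measures: it is weak*-closed and the infimum of `J_f` over `𝒬`
equals the infimum of `f` over `Θ`, for every bounded below, lsc, coercive `f`. -/
def AllowsDiracs {Θ : Type*} [MeasurableSpace Θ] [TopologicalSpace Θ] [OpensMeasurableSpace Θ]
    (𝒬 : Set (ProbabilityMeasure Θ)) : Prop :=
  IsClosed 𝒬 ∧ ∀ f : Θ → ℝ, (∃ b, ∀ θ, b ≤ f θ) → LowerSemicontinuous f → Coercive f →
    (⨅ ν : 𝒬, J f (ν.1 : Measure Θ)) = ((⨅ θ, f θ : ℝ) : EReal)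

/-- With a divergence bounded by `M` on `𝒬 × 𝒢`, a finite element and an empirical
loss minimiser `P⋆ ∈ 𝒬`, every minimiser of the GVI objective lies in
`ℛ⋆ = {Q ∈ 𝒬 : J_L(Q) − J_L(P⋆) ≤ M/(nβ)}`, for every prior in `𝒢`. -/
theorem gvi_posterior_mem_Rstar {Θ : Type*} [TopologicalSpace Θ] [PolishSpace Θ]
    [MeasurableSpace Θ] [BorelSpace Θ]
    (L : Θ → ℝ) (hLmeas : Measurable L) (hLbdd : ∃ b : ℝ, ∀ θ, b ≤ L θ)
    (𝒬 𝒢 : Set (ProbabilityMeasure Θ))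
    (D : ProbabilityMeasure Θ → ProbabilityMeasure Θ → ℝ)
    (hDnn : ∀ P Q : ProbabilityMeasure Θ, 0 ≤ D P Q)
    (M β : ℝ) (hM : 0 < M) (hβ : 0 < β) (n : ℕ) (hn : 1 ≤ n)
    (hDbdd : ∀ Q ∈ 𝒬, ∀ Pr ∈ 𝒢, D Q Pr ≤ M)
    (hfin : ∀ Pr ∈ 𝒢, ∃ Q ∈ 𝒬, T n β L D Pr Q < (⊤ : EReal))
    (Pstar : ProbabilityMeasure Θ) (hPstar𝒬 : Pstar ∈ 𝒬)
    (hPstar : ∀ Q ∈ 𝒬, J L (Pstar : Measure Θ) ≤ J L (Q : Measure Θ)) :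
    ∀ Pr ∈ 𝒢, ∀ Qn : ProbabilityMeasure Θ, Qn ∈ 𝒬 →
      (∀ Q ∈ 𝒬, T n β L D Pr Qn ≤ T n β L D Pr Q) →
      Qn ∈ 𝒬 ∧ J L (Qn : Measure Θ) - J L (Pstar : Measure Θ) ≤ ((M / (n * β) : ℝ) : EReal) := by
  classical
  obtain ⟨b, hb⟩ := hLbdd
  -- the negative part of J is finite for any probability measure
  have hneg : ∀ ν : ProbabilityMeasure Θ,
      (∫⁻ θ, ENNReal.ofReal (-L θ) ∂(ν : Measure Θ)) ≠ ⊤ := by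
    intro ν
    have h1 : (∫⁻ θ, ENNReal.ofReal (-L θ) ∂(ν : Measure Θ))
        ≤ ∫⁻ _θ, ENNReal.ofReal (-b) ∂(ν : Measure Θ) :=
      lintegral_mono fun θ => ENNReal.ofReal_le_ofReal (by linarith [hb θ])
    rw [lintegral_const] at h1
    exact ne_top_of_le_ne_top (by simp [ENNReal.mul_ne_top]) h1
  have hJnb : ∀ ν : ProbabilityMeasure Θ, J L (ν : Measure Θ) ≠ ⊥ := by
    intro ν
    unfold J
    rw [sub_eq_add_neg, Ne, EReal.add_eq_bot_iff]
    push_neg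
    exact ⟨EReal.coe_ennreal_ne_bot _, by
      simp only [Ne, EReal.neg_eq_bot_iff, EReal.coe_ennreal_eq_top_iff]
      exact hneg ν⟩
  intro Pr hPr Qn hQn hmin
  refine ⟨hQn, ?_⟩
  by_cases hPtop : J L (Pstar : Measure Θ) = ⊤
  · rw [hPtop, EReal.sub_top]
    exact bot_le
  -- Pstar has a real value r
  set r : ℝ := (J L (Pstar : Measure Θ)).toReal with hr
  have hrp : (r : EReal) = J L (Pstar : Measure Θ) :=
    EReal.coe_toReal hPtop (hJnb Pstar)
  have key := hmin Pstar hPstar𝒬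
  unfold T at key
  have hd0 : (0 : EReal) ≤ ((1 / β * D Qn Pr : ℝ) : EReal) := by
    have : (0 : ℝ) ≤ 1 / β * D Qn Pr :=
      mul_nonneg (by positivity) (hDnn Qn Pr)
    exact_mod_cast this
  have hdM : ((1 / β * D Pstar Pr : ℝ) : EReal) ≤ ((M / β : ℝ) : EReal) := by
    have : 1 / β * D Pstar Pr ≤ M / β := by
      have h2 : D Pstar Pr ≤ M := hDbdd Pstar hPstar𝒬 Pr hPr
      rw [div_eq_mul_inv M β, mul_comm M β⁻¹, ← one_div]
      exact mul_le_mul_of_nonneg_left h2 (by positivity)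
    exact_mod_cast this
  have hmain : ((n : ℝ) : EReal) * J L (Qn : Measure Θ)
      ≤ ((n * r + M / β : ℝ) : EReal) := by
    calc ((n : ℝ) : EReal) * J L (Qn : Measure Θ)
        = ((n : ℝ) : EReal) * J L (Qn : Measure Θ) + 0 := (add_zero _).symm
      _ ≤ ((n : ℝ) : EReal) * J L (Qn : Measure Θ)
            + ((1 / β * D Qn Pr : ℝ) : EReal) := add_le_add_right hd0 _
      _ ≤ ((n : ℝ) : EReal) * J L (Pstar : Measure Θ)
            + ((1 / β * D Pstar Pr : ℝ) : EReal) := key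
      _ ≤ ((n : ℝ) : EReal) * ((r : ℝ) : EReal) + ((M / β : ℝ) : EReal) := by
          rw [hrp]; exact add_le_add_right hdM _
      _ = ((n * r + M / β : ℝ) : EReal) := by
          rw [← EReal.coe_mul, ← EReal.coe_add]
  have hnpos : (0 : ℝ) < (n : ℝ) := by exact_mod_cast hn
  have hQtop : J L (Qn : Measure Θ) ≠ ⊤ := by
    intro h
    rw [h, EReal.mul_top_of_pos (by exact_mod_cast hnpos)] at hmain
    exact EReal.coe_ne_top _ (top_le_iff.mp hmain)
  set q : ℝ := (J L (Qn : Measure Θ)).toReal with hq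
  have hqe : (q : EReal) = J L (Qn : Measure Θ) :=
    EReal.coe_toReal hQtop (hJnb Qn)
  rw [← hqe, ← hrp, ← EReal.coe_sub, EReal.coe_le_coe_iff]
  rw [← hqe, ← EReal.coe_mul, EReal.coe_le_coe_iff] at hmain
  have hnb : (0 : ℝ) < (n : ℝ) * β := mul_pos hnpos hβ
  rw [le_div_iff₀ hnb]
  nlinarith [mul_le_mul_of_nonneg_right hmain hβ.le, div_mul_cancel₀ M hβ.ne']
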